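/- Let n be a positive integer, let A, B : Fin n → Fin n → ℤ, and let M be a nonnegative integer with |A i k| ≤ M and |B k j| ≤ M for all i, j, k. Define A' i k = A i k + 2·(k+1)·M and B' k j = B k j − 2·(k+1)·M (where k+1 is the 1-based index of k). Then: (1) for every i, the function k ↦ A' i k is non-decreasing; (2) for every j, the function k ↦ B' k j is non-increasing; and (3) for all i, j, min_{k} (A' i k + B' k j) = min_{k} (A i k + B k j), i.e., the (min,+) matrix product of A' and B' equals the (min,+) matrix product of A and B. -/
import Mathlib

theorem minplus_matrix_shift_nondecr_nonincr
    (n : ℕ) (hn : 0 < n) (A B : Fin n → Fin n → ℤ) (M : ℕ)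
    (hA : ∀ i k : Fin n, |A i k| ≤ (M : ℤ))
    (hB : ∀ k j : Fin n, |B k j| ≤ (M : ℤ)) :
    (∀ i : Fin n, Monotone fun k : Fin n => A i k + 2 * ((k : ℕ) + 1) * (M : ℤ)) ∧
    (∀ j : Fin n, Antitone fun k : Fin n => B k j - 2 * ((k : ℕ) + 1) * (M : ℤ)) ∧
    (∀ i j : Fin n,
      Finset.univ.inf' ⟨⟨0, hn⟩, Finset.mem_univ _⟩
          (fun k : Fin n =>
            (A i k + 2 * ((k : ℕ) + 1) * (M : ℤ)) +
              (B k j - 2 * ((k : ℕ) + 1) * (M : ℤ)))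
        = Finset.univ.inf' ⟨⟨0, hn⟩, Finset.mem_univ _⟩
            (fun k : Fin n => A i k + B k j)) := by
  refine ⟨?_, ?_, ?_⟩
  · intro i k k' hkk'
    simp only
    rcases eq_or_lt_of_le hkk' with h | h
    · simp [h]
    · have hk : (k : ℕ) + 1 ≤ (k' : ℕ) := h
      have h1 : A i k - A i k' ≤ 2 * (M : ℤ) := by
        have := abs_le.mp (hA i k); have := abs_le.mp (hA i k'); omega
      have h2 : 2 * ((k : ℕ) + 1 : ℤ) * M + 2 * M ≤ 2 * ((k' : ℕ) + 1 : ℤ) * M := by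
        have : ((k : ℕ) : ℤ) + 1 ≤ ((k' : ℕ) : ℤ) := by exact_mod_cast hk
        nlinarith [Int.ofNat_nonneg M]
      linarith
  · intro j k k' hkk'
    simp only
    rcases eq_or_lt_of_le hkk' with h | h
    · simp [h]
    · have hk : (k : ℕ) + 1 ≤ (k' : ℕ) := h
      have h1 : B k' j - B k j ≤ 2 * (M : ℤ) := by
        have := abs_le.mp (hB k j); have := abs_le.mp (hB k' j); omega
      have h2 : 2 * ((k : ℕ) + 1 : ℤ) * M + 2 * M ≤ 2 * ((k' : ℕ) + 1 : ℤ) * M := by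
        have : ((k : ℕ) : ℤ) + 1 ≤ ((k' : ℕ) : ℤ) := by exact_mod_cast hk
        nlinarith [Int.ofNat_nonneg M]
      linarith
  · intro i j
    congr 1
    funext k
    ring
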